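/- Peeling lemma for policy improvement: for any four DTRs π, π', π'', π^b, any stage k ∈ {1,…,K−1}, and any history h⃗_k ∈ 𝓗_k, writing a_k = π_k(h⃗_k), the relative value functions satisfy V^{π_k π'_{(k+1):K} / π^b}_k(h⃗_k) − V^{π_k π''_{(k+1):K} / π^b}_k(h⃗_k) ≤ sup_{p ∈ 𝒫_{h⃗_k, a_k}} ∫ [ V^{π'_{(k+1):K}/π^b}_{k+1}(h⃗_k, a_k, r, x) − V^{π''_{(k+1):K}/π^b}_{k+1}(h⃗_k, a_k, r, x) ] dp(r, x). (Supplementary peeling lemma for improvement.) -/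
import Mathlib


open MeasureTheory

noncomputable section

open Classical in
/-- Real-valued indicator `1{p}` of a proposition. -/
noncomputable def ind (p : Prop) : ℝ := if p then 1 else 0

/-- Sign function: `+1` for positive, `−1` for negative, `0` at zero. -/
noncomputable def sgn (c : ℝ) : ℝ := if 0 < c then 1 else if c < 0 then -1 else 0

section DTR

/- Multi-stage setup: histories `H k` for stage indices `k = 0, …, K-1`
(stage `k+1` of the paper); `H K` is the terminal (post-trajectory) type.
New covariates arising after stage `k` live in `X (k+1)`, and
`concat k h a r x` is the concatenated history `(h⃗_k, a_k, r_k, x_{k+1})`.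
`P k h a` is the IV-constrained set of joint laws of `(R_k, X_{k+1})`.
At the last stage the new covariate is a null quantity that is simply ignored
(the terminal value function is identically `0`, so the stage-`K` formulas of the
paper are recovered). -/
variable (X : ℕ → Type) [∀ k, MeasurableSpace (X k)]
variable (H : ℕ → Type)
variable (concat : ∀ k, H k → ℝ → ℝ → X (k + 1) → H (k + 1))
variable (P : ∀ k, H k → ℝ → Set (Measure (ℝ × X (k + 1))))

open Classical in
/-- Relative value function of `π` with respect to the baseline `πb`, by backward induction
with `fuel` stages to go.  Writing `a'_k = π^b_k(h⃗_k)`: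
if `π_k(h⃗_k) = a'_k` it is `inf_{p ∈ 𝒫_{h⃗_k,a'_k}} ∫ V^{π/π^b}_{k+1}(h⃗_k,a'_k,r,x) dp`,
otherwise it is
`inf_{p ∈ 𝒫_{h⃗_k,−a'_k}} ∫ [r + V^{π/π^b}_{k+1}(h⃗_k,−a'_k,r,x)] dp − sup_{p' ∈ 𝒫_{h⃗_k,a'_k}} ∫ r dp'`. -/
noncomputable def rVal (πb π : ∀ k, H k → ℝ) : (fuel : ℕ) → (k : ℕ) → H k → ℝ
  | 0, _, _ => 0
  | fuel + 1, k, h =>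
      if π k h = πb k h then
        sInf ((fun p : Measure (ℝ × X (k + 1)) =>
            ∫ q, rVal πb π fuel (k + 1) (concat k h (πb k h) q.1 q.2) ∂p) '' P k h (πb k h))
      else
        sInf ((fun p : Measure (ℝ × X (k + 1)) =>
            ∫ q, (q.1 + rVal πb π fuel (k + 1) (concat k h (-(πb k h)) q.1 q.2)) ∂p)
            '' P k h (-(πb k h)))
          - sSup ((fun p : Measure (ℝ × X (k + 1)) => ∫ q, q.1 ∂p) '' P k h (πb k h))

/-- Relative value function `V^{π/π^b}_k` in a `K`-stage problem (stages `k = 0, …, K-1`). -/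
noncomputable def rV (K : ℕ) (πb π : ∀ k, H k → ℝ) (k : ℕ) (h : H k) : ℝ :=
  rVal X H concat P πb π (K - k) k h

open Classical in
/-- Relative `Q`-function `Q^{π/π^b}_k(h⃗_k, a)`. -/
noncomputable def rQ (K : ℕ) (πb π : ∀ k, H k → ℝ) (k : ℕ) (h : H k) (a : ℝ) : ℝ :=
  if a = πb k h then
    sInf ((fun p : Measure (ℝ × X (k + 1)) =>
        ∫ q, rV X H concat P K πb π (k + 1) (concat k h (πb k h) q.1 q.2) ∂p)
        '' P k h (πb k h))
  else
    sInf ((fun p : Measure (ℝ × X (k + 1)) =>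
        ∫ q, (q.1 + rV X H concat P K πb π (k + 1) (concat k h (-(πb k h)) q.1 q.2)) ∂p)
        '' P k h (-(πb k h)))
      - sSup ((fun p : Measure (ℝ × X (k + 1)) => ∫ q, q.1 ∂p) '' P k h (πb k h))

/-- Relative contrast `𝒞^{π/π^b}_k(h⃗_k)`
`= sup_{p'∈𝒫_{h⃗_k,a'_k}} ∫ r dp' + inf_{p∈𝒫_{h⃗_k,a'_k}} ∫ V^{π/π^b}_{k+1}(h⃗_k,a'_k,r,x) dp
   − inf_{p∈𝒫_{h⃗_k,−a'_k}} ∫ [r + V^{π/π^b}_{k+1}(h⃗_k,−a'_k,r,x)] dp`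
(at the final stage the middle term is `inf ∫ 0 dp = 0`, recovering the stage-`K` formula). -/
noncomputable def rC (K : ℕ) (πb π : ∀ k, H k → ℝ) (k : ℕ) (h : H k) : ℝ :=
  sSup ((fun p : Measure (ℝ × X (k + 1)) => ∫ q, q.1 ∂p) '' P k h (πb k h))
    + sInf ((fun p : Measure (ℝ × X (k + 1)) =>
        ∫ q, rV X H concat P K πb π (k + 1) (concat k h (πb k h) q.1 q.2) ∂p)
        '' P k h (πb k h))
    - sInf ((fun p : Measure (ℝ × X (k + 1)) =>
        ∫ q, (q.1 + rV X H concat P K πb π (k + 1) (concat k h (-(πb k h)) q.1 q.2)) ∂p)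
        '' P k h (-(πb k h)))

end DTR


/-- The DTR that acts according to `π1` at stage `k` and according to `π2` at the other
stages (only its behavior at stages `≥ k` matters for stage-`k` value functions). -/
def mixAt (H : ℕ → Type) (π1 π2 : ∀ k, H k → ℝ) (k : ℕ) : ∀ j, H j → ℝ :=
  fun j => if j = k then π1 j else π2 j


/-- `rVal` only depends on the policies' behavior at stages `≥ j`. -/
theorem rVal_congr_aux
    (X : ℕ → Type) [∀ k, MeasurableSpace (X k)] (H : ℕ → Type)
    (concat : ∀ k, H k → ℝ → ℝ → X (k + 1) → H (k + 1))
    (P : ∀ k, H k → ℝ → Set (Measure (ℝ × X (k + 1))))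
    (β₁ ρ₁ β₂ ρ₂ : ∀ k, H k → ℝ) :
    ∀ (f j : ℕ),
      (∀ j' (h' : H j'), j ≤ j' → β₁ j' h' = β₂ j' h' ∧ ρ₁ j' h' = ρ₂ j' h') →
      ∀ h : H j, rVal X H concat P β₁ ρ₁ f j h = rVal X H concat P β₂ ρ₂ f j h := by
  intro f
  induction f with
  | zero => intro j _ h; rfl
  | succ f ih =>
    intro j hag h
    have hb : β₁ j h = β₂ j h := (hag j h le_rfl).1
    have hr : ρ₁ j h = ρ₂ j h := (hag j h le_rfl).2
    have hnext : ∀ h' : H (j + 1),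
        rVal X H concat P β₁ ρ₁ f (j + 1) h' = rVal X H concat P β₂ ρ₂ f (j + 1) h' :=
      ih (j + 1) (fun j' h' hj' => hag j' h' (by omega))
    simp only [rVal, hb, hr, hnext]

/-- If the policy agrees with the baseline from stage `j` on (and the baseline takes
values `±1` so the relevant sets are nonempty), the relative value is `0`. -/
theorem rVal_self_aux
    (X : ℕ → Type) [∀ k, MeasurableSpace (X k)] (H : ℕ → Type)
    (concat : ∀ k, H k → ℝ → ℝ → X (k + 1) → H (k + 1))
    (P : ∀ k, H k → ℝ → Set (Measure (ℝ × X (k + 1))))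
    (hPne : ∀ k (h : H k) (a : ℝ), a = 1 ∨ a = -1 → (P k h a).Nonempty)
    (β ρ : ∀ k, H k → ℝ) :
    ∀ (f j : ℕ),
      (∀ j' (h' : H j'), j ≤ j' → ρ j' h' = β j' h' ∧ (β j' h' = 1 ∨ β j' h' = -1)) →
      ∀ h : H j, rVal X H concat P β ρ f j h = 0 := by
  intro f
  induction f with
  | zero => intro j _ h; rfl
  | succ f ih =>
    intro j hag h
    have h1 : ρ j h = β j h := (hag j h le_rfl).1
    have h2 := (hag j h le_rfl).2
    have hnext : ∀ h' : H (j + 1), rVal X H concat P β ρ f (j + 1) h' = 0 :=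
      ih (j + 1) (fun j' h' hj' => hag j' h' (by omega))
    obtain ⟨p₀, hp₀⟩ := hPne j h (β j h) h2
    simp only [rVal, h1, if_pos rfl, hnext, integral_zero]
    rw [Set.Nonempty.image_const ⟨p₀, hp₀⟩ (0 : ℝ)]
    exact csInf_singleton 0

/-- Key decomposition: any relative value function is pointwise bounded above by the
negated sum of finitely many relative value functions of other policy pairs. -/
theorem rVal_upper_aux
    (X : ℕ → Type) [∀ k, MeasurableSpace (X k)] (H : ℕ → Type)
    (concat : ∀ k, H k → ℝ → ℝ → X (k + 1) → H (k + 1))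
    (P : ∀ k, H k → ℝ → Set (Measure (ℝ × X (k + 1))))
    (K : ℕ)
    (hPne : ∀ k (h : H k) (a : ℝ), a = 1 ∨ a = -1 → (P k h a).Nonempty)
    (hIntR : ∀ k (h : H k) (a : ℝ), ∀ p ∈ P k h a,
      Integrable (fun q : ℝ × X (k + 1) => q.1) p)
    (hIntV : ∀ (πb π : ∀ k, H k → ℝ) k (h : H k) (a : ℝ), ∀ p ∈ P k h a,
      Integrable (fun q : ℝ × X (k + 1) =>
        rVal X H concat P πb π (K - (k + 1)) (k + 1) (concat k h a q.1 q.2)) p)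
    (hBddB : ∀ (πb π : ∀ k, H k → ℝ) k (h : H k) (a : ℝ),
      BddBelow ((fun p : Measure (ℝ × X (k + 1)) =>
          ∫ q, (q.1 + rVal X H concat P πb π (K - (k + 1)) (k + 1) (concat k h a q.1 q.2)) ∂p)
          '' P k h a)
      ∧ BddBelow ((fun p : Measure (ℝ × X (k + 1)) =>
          ∫ q, rVal X H concat P πb π (K - (k + 1)) (k + 1) (concat k h a q.1 q.2) ∂p)
          '' P k h a))
    (hBddA : ∀ k (h : H k) (a : ℝ),
      BddAbove ((fun p : Measure (ℝ × X (k + 1)) => ∫ q, q.1 ∂p) '' P k h a))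
    (πb : ∀ k, H k → ℝ) (hπb : ∀ k (h : H k), πb k h = 1 ∨ πb k h = -1)
    (π' : ∀ k, H k → ℝ) :
    ∀ (f j : ℕ), j + f = K →
      ∃ (n : ℕ) (B R : Fin n → ∀ k, H k → ℝ),
        ∀ h : H j, rVal X H concat P πb π' f j h
          ≤ -∑ i, rVal X H concat P (B i) (R i) f j h := by
  intro f
  induction f with
  | zero =>
    intro j _
    exact ⟨0, Fin.elim0, Fin.elim0, fun h => by simp [rVal]⟩
  | succ f ih =>
    intro j hjK
    obtain ⟨n, B, R, hle⟩ := ih (j + 1) (by omega)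
    have hKf : K - (j + 1) = f := by omega
    -- the stage-j "flip" selector and the negated baseline
    refine ⟨n + 1,
      Fin.cons (mixAt H (fun k' h' => if π' k' h' = πb k' h' then πb k' h' else -(πb k' h'))
        (fun k' h' => -(πb k' h')) j)
        (fun i => mixAt H (fun k' h' => if π' k' h' = πb k' h' then πb k' h' else -(πb k' h'))
          (B i) j),
      Fin.cons (mixAt H πb (fun k' h' => -(πb k' h')) j)
        (fun i => mixAt H (fun k' h' => if π' k' h' = πb k' h' then πb k' h' else -(πb k' h'))
          (R i) j), ?_⟩
    intro h
    rw [Fin.sum_univ_succ]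
    simp only [Fin.cons_zero, Fin.cons_succ]
    have hπbne : ∀ h' : H j, πb j h' ≠ -(πb j h') := by
      intro h'; rcases hπb j h' with h1 | h1 <;> rw [h1] <;> norm_num
    have hnegpm : -(πb j h) = 1 ∨ -(πb j h) = -1 := by
      rcases hπb j h with h1 | h1 <;> rw [h1] <;> norm_num
    -- continuation of the F-pair is identically 0
    have hz : ∀ h' : H (j + 1),
        rVal X H concat P
          (mixAt H (fun k' h' => if π' k' h' = πb k' h' then πb k' h' else -(πb k' h'))
            (fun k' h' => -(πb k' h')) j)
          (mixAt H πb (fun k' h' => -(πb k' h')) j) f (j + 1) h' = 0 := by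
      refine rVal_self_aux X H concat P hPne _ _ f (j + 1) ?_
      intro j' h' hj'
      have hne : j' ≠ j := by omega
      constructor
      · simp [mixAt, hne]
      · simp only [mixAt, if_neg hne]
        rcases hπb j' h' with h1 | h1 <;> rw [h1] <;> norm_num
    -- continuations of the modified pairs agree with the original pairs
    have hcg : ∀ i (h' : H (j + 1)),
        rVal X H concat P
          (mixAt H (fun k' h' => if π' k' h' = πb k' h' then πb k' h' else -(πb k' h')) (B i) j)
          (mixAt H (fun k' h' => if π' k' h' = πb k' h' then πb k' h' else -(πb k' h')) (R i) j)
          f (j + 1) h'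
        = rVal X H concat P (B i) (R i) f (j + 1) h' := by
      intro i h'
      refine rVal_congr_aux X H concat P _ _ _ _ f (j + 1) ?_ h'
      intro j' h'' hj'
      have hne : j' ≠ j := by omega
      constructor <;> simp [mixAt, hne]
    by_cases hc : π' j h = πb j h
    · -- agree case
      have e0 : rVal X H concat P πb π' (f + 1) j h
          = sInf ((fun p : Measure (ℝ × X (j + 1)) =>
              ∫ q, rVal X H concat P πb π' f (j + 1) (concat j h (πb j h) q.1 q.2) ∂p)
              '' P j h (πb j h)) := by
        simp only [rVal]; rw [if_pos hc]
      have hbF : mixAt H (fun k' h' => if π' k' h' = πb k' h' then πb k' h' else -(πb k' h'))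
          (fun k' h' => -(πb k' h')) j j h = πb j h := by simp [mixAt, hc]
      have hrF : mixAt H πb (fun k' h' => -(πb k' h')) j j h = πb j h := by simp [mixAt]
      have eF : rVal X H concat P
          (mixAt H (fun k' h' => if π' k' h' = πb k' h' then πb k' h' else -(πb k' h'))
            (fun k' h' => -(πb k' h')) j)
          (mixAt H πb (fun k' h' => -(πb k' h')) j) (f + 1) j h = 0 := by
        simp only [rVal]
        rw [hbF, hrF, if_pos rfl]
        simp only [hz, integral_zero]
        rw [Set.Nonempty.image_const (hPne j h (πb j h) (hπb j h)) (0 : ℝ)]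
        exact csInf_singleton 0
      have eI : ∀ i, rVal X H concat P
          (mixAt H (fun k' h' => if π' k' h' = πb k' h' then πb k' h' else -(πb k' h')) (B i) j)
          (mixAt H (fun k' h' => if π' k' h' = πb k' h' then πb k' h' else -(πb k' h')) (R i) j)
          (f + 1) j h
          = sInf ((fun p : Measure (ℝ × X (j + 1)) =>
              ∫ q, rVal X H concat P (B i) (R i) f (j + 1) (concat j h (πb j h) q.1 q.2) ∂p)
              '' P j h (πb j h)) := by
        intro i
        have hb : mixAt H (fun k' h' => if π' k' h' = πb k' h' then πb k' h' else -(πb k' h'))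
            (B i) j j h = πb j h := by simp [mixAt, hc]
        have hr : mixAt H (fun k' h' => if π' k' h' = πb k' h' then πb k' h' else -(πb k' h'))
            (R i) j j h = πb j h := by simp [mixAt, hc]
        simp only [rVal]
        rw [hb, hr, if_pos rfl]
        simp only [hcg]
      rw [e0, eF]
      simp only [eI]
      obtain ⟨p₀, hp₀⟩ := hPne j h (πb j h) (hπb j h)
      have hIV' := hIntV πb π' j h (πb j h) p₀ hp₀
      rw [hKf] at hIV'
      have hIVi : ∀ i, Integrable (fun q : ℝ × X (j + 1) =>
          rVal X H concat P (B i) (R i) f (j + 1) (concat j h (πb j h) q.1 q.2)) p₀ := by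
        intro i
        have := hIntV (B i) (R i) j h (πb j h) p₀ hp₀
        rwa [hKf] at this
      have hsum : Integrable (fun q : ℝ × X (j + 1) =>
          ∑ i, rVal X H concat P (B i) (R i) f (j + 1) (concat j h (πb j h) q.1 q.2)) p₀ :=
        integrable_finset_sum _ (fun i _ => hIVi i)
      have hb' : BddBelow ((fun p : Measure (ℝ × X (j + 1)) =>
          ∫ q, rVal X H concat P πb π' f (j + 1) (concat j h (πb j h) q.1 q.2) ∂p)
          '' P j h (πb j h)) := by
        have := (hBddB πb π' j h (πb j h)).2
        rwa [hKf] at this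
      have h1 : sInf ((fun p : Measure (ℝ × X (j + 1)) =>
          ∫ q, rVal X H concat P πb π' f (j + 1) (concat j h (πb j h) q.1 q.2) ∂p)
          '' P j h (πb j h))
          ≤ ∫ q, rVal X H concat P πb π' f (j + 1) (concat j h (πb j h) q.1 q.2) ∂p₀ :=
        csInf_le hb' ⟨p₀, hp₀, rfl⟩
      have h2 : ∫ q, rVal X H concat P πb π' f (j + 1) (concat j h (πb j h) q.1 q.2) ∂p₀
          ≤ -∑ i, ∫ q, rVal X H concat P (B i) (R i) f (j + 1) (concat j h (πb j h) q.1 q.2) ∂p₀ := by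
        have hneg : Integrable (fun q : ℝ × X (j + 1) =>
            -∑ i, rVal X H concat P (B i) (R i) f (j + 1) (concat j h (πb j h) q.1 q.2)) p₀ :=
          hsum.neg
        have := integral_mono hIV' hneg
          (fun q => hle (concat j h (πb j h) q.1 q.2))
        rwa [integral_neg, integral_finset_sum _ (fun i _ => hIVi i)] at this
      have h4 : ∀ i, sInf ((fun p : Measure (ℝ × X (j + 1)) =>
          ∫ q, rVal X H concat P (B i) (R i) f (j + 1) (concat j h (πb j h) q.1 q.2) ∂p)
          '' P j h (πb j h))
          ≤ ∫ q, rVal X H concat P (B i) (R i) f (j + 1) (concat j h (πb j h) q.1 q.2) ∂p₀ := by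
        intro i
        refine csInf_le ?_ ⟨p₀, hp₀, rfl⟩
        have := (hBddB (B i) (R i) j h (πb j h)).2
        rwa [hKf] at this
      have h5 := Finset.sum_le_sum (fun i (_ : i ∈ Finset.univ) => h4 i)
      linarith
    · -- disagree case
      have e0 : rVal X H concat P πb π' (f + 1) j h
          = sInf ((fun p : Measure (ℝ × X (j + 1)) =>
              ∫ q, (q.1 + rVal X H concat P πb π' f (j + 1) (concat j h (-(πb j h)) q.1 q.2)) ∂p)
              '' P j h (-(πb j h)))
            - sSup ((fun p : Measure (ℝ × X (j + 1)) => ∫ q, q.1 ∂p) '' P j h (πb j h)) := by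
        simp only [rVal]; rw [if_neg hc]
      have hbF : mixAt H (fun k' h' => if π' k' h' = πb k' h' then πb k' h' else -(πb k' h'))
          (fun k' h' => -(πb k' h')) j j h = -(πb j h) := by simp [mixAt, hc]
      have hrF : mixAt H πb (fun k' h' => -(πb k' h')) j j h = πb j h := by simp [mixAt]
      have eF : rVal X H concat P
          (mixAt H (fun k' h' => if π' k' h' = πb k' h' then πb k' h' else -(πb k' h'))
            (fun k' h' => -(πb k' h')) j)
          (mixAt H πb (fun k' h' => -(πb k' h')) j) (f + 1) j h
          = sInf ((fun p : Measure (ℝ × X (j + 1)) => ∫ q, q.1 ∂p) '' P j h (πb j h))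
            - sSup ((fun p : Measure (ℝ × X (j + 1)) => ∫ q, q.1 ∂p) '' P j h (-(πb j h))) := by
        simp only [rVal]
        rw [hbF, hrF, if_neg (hπbne h), neg_neg]
        simp only [hz, add_zero]
      have eI : ∀ i, rVal X H concat P
          (mixAt H (fun k' h' => if π' k' h' = πb k' h' then πb k' h' else -(πb k' h')) (B i) j)
          (mixAt H (fun k' h' => if π' k' h' = πb k' h' then πb k' h' else -(πb k' h')) (R i) j)
          (f + 1) j h
          = sInf ((fun p : Measure (ℝ × X (j + 1)) =>
              ∫ q, rVal X H concat P (B i) (R i) f (j + 1) (concat j h (-(πb j h)) q.1 q.2) ∂p)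
              '' P j h (-(πb j h))) := by
        intro i
        have hb : mixAt H (fun k' h' => if π' k' h' = πb k' h' then πb k' h' else -(πb k' h'))
            (B i) j j h = -(πb j h) := by simp [mixAt, hc]
        have hr : mixAt H (fun k' h' => if π' k' h' = πb k' h' then πb k' h' else -(πb k' h'))
            (R i) j j h = -(πb j h) := by simp [mixAt, hc]
        simp only [rVal]
        rw [hb, hr, if_pos rfl]
        simp only [hcg]
      rw [e0, eF]
      simp only [eI]
      obtain ⟨p', hp'⟩ := hPne j h (-(πb j h)) hnegpm
      obtain ⟨p₁, hp₁⟩ := hPne j h (πb j h) (hπb j h)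
      have hIV' := hIntV πb π' j h (-(πb j h)) p' hp'
      rw [hKf] at hIV'
      have hIVi : ∀ i, Integrable (fun q : ℝ × X (j + 1) =>
          rVal X H concat P (B i) (R i) f (j + 1) (concat j h (-(πb j h)) q.1 q.2)) p' := by
        intro i
        have := hIntV (B i) (R i) j h (-(πb j h)) p' hp'
        rwa [hKf] at this
      have hsum : Integrable (fun q : ℝ × X (j + 1) =>
          ∑ i, rVal X H concat P (B i) (R i) f (j + 1) (concat j h (-(πb j h)) q.1 q.2)) p' :=
        integrable_finset_sum _ (fun i _ => hIVi i)
      have hIR := hIntR j h (-(πb j h)) p' hp'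
      have hb1 : BddBelow ((fun p : Measure (ℝ × X (j + 1)) =>
          ∫ q, (q.1 + rVal X H concat P πb π' f (j + 1) (concat j h (-(πb j h)) q.1 q.2)) ∂p)
          '' P j h (-(πb j h))) := by
        have := (hBddB πb π' j h (-(πb j h))).1
        rwa [hKf] at this
      have A1 : sInf ((fun p : Measure (ℝ × X (j + 1)) =>
          ∫ q, (q.1 + rVal X H concat P πb π' f (j + 1) (concat j h (-(πb j h)) q.1 q.2)) ∂p)
          '' P j h (-(πb j h)))
          ≤ ∫ q, (q.1 + rVal X H concat P πb π' f (j + 1) (concat j h (-(πb j h)) q.1 q.2)) ∂p' :=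
        csInf_le hb1 ⟨p', hp', rfl⟩
      have A2 : ∫ q, (q.1 + rVal X H concat P πb π' f (j + 1) (concat j h (-(πb j h)) q.1 q.2)) ∂p'
          = (∫ q : ℝ × X (j + 1), q.1 ∂p')
            + ∫ q, rVal X H concat P πb π' f (j + 1) (concat j h (-(πb j h)) q.1 q.2) ∂p' :=
        integral_add hIR hIV'
      have A2' : ∫ q, rVal X H concat P πb π' f (j + 1) (concat j h (-(πb j h)) q.1 q.2) ∂p'
          ≤ -∑ i, ∫ q, rVal X H concat P (B i) (R i) f (j + 1) (concat j h (-(πb j h)) q.1 q.2) ∂p' := by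
        have hneg : Integrable (fun q : ℝ × X (j + 1) =>
            -∑ i, rVal X H concat P (B i) (R i) f (j + 1) (concat j h (-(πb j h)) q.1 q.2)) p' :=
          hsum.neg
        have := integral_mono hIV' hneg
          (fun q => hle (concat j h (-(πb j h)) q.1 q.2))
        rwa [integral_neg, integral_finset_sum _ (fun i _ => hIVi i)] at this
      have A3 : (∫ q : ℝ × X (j + 1), q.1 ∂p')
          ≤ sSup ((fun p : Measure (ℝ × X (j + 1)) => ∫ q, q.1 ∂p) '' P j h (-(πb j h))) :=
        le_csSup (hBddA j h (-(πb j h))) ⟨p', hp', rfl⟩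
      have A4 : ∀ i, sInf ((fun p : Measure (ℝ × X (j + 1)) =>
          ∫ q, rVal X H concat P (B i) (R i) f (j + 1) (concat j h (-(πb j h)) q.1 q.2) ∂p)
          '' P j h (-(πb j h)))
          ≤ ∫ q, rVal X H concat P (B i) (R i) f (j + 1) (concat j h (-(πb j h)) q.1 q.2) ∂p' := by
        intro i
        refine csInf_le ?_ ⟨p', hp', rfl⟩
        have := (hBddB (B i) (R i) j h (-(πb j h))).2
        rwa [hKf] at this
      have A5 := Finset.sum_le_sum (fun i (_ : i ∈ Finset.univ) => A4 i)
      -- sInf of rewards at the baseline action is ≤ its sSup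
      have hzb : ∀ h' : H (j + 1), rVal X H concat P πb πb f (j + 1) h' = 0 :=
        rVal_self_aux X H concat P hPne πb πb f (j + 1)
          (fun j' h' _ => ⟨rfl, hπb j' h'⟩)
      have hbb : BddBelow ((fun p : Measure (ℝ × X (j + 1)) => ∫ q, q.1 ∂p) '' P j h (πb j h)) := by
        have hB := (hBddB πb πb j h (πb j h)).1
        rw [hKf] at hB
        have heq : (fun p : Measure (ℝ × X (j + 1)) =>
            ∫ q, (q.1 + rVal X H concat P πb πb f (j + 1) (concat j h (πb j h) q.1 q.2)) ∂p)
            = fun p : Measure (ℝ × X (j + 1)) => ∫ q, q.1 ∂p := by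
          funext p; simp [hzb]
        rwa [heq] at hB
      have A6 : sInf ((fun p : Measure (ℝ × X (j + 1)) => ∫ q, q.1 ∂p) '' P j h (πb j h))
          ≤ sSup ((fun p : Measure (ℝ × X (j + 1)) => ∫ q, q.1 ∂p) '' P j h (πb j h)) :=
        le_trans (csInf_le hbb ⟨p₁, hp₁, rfl⟩) (le_csSup (hBddA j h (πb j h)) ⟨p₁, hp₁, rfl⟩)
      linarith

/-- Difference of infima is bounded by the supremum of differences. -/
theorem sInf_sub_sInf_le_sSup_aux {α : Type*} (S : Set α) (φ' φ'' δ : α → ℝ)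
    (hS : S.Nonempty)
    (hb' : BddBelow (φ' '' S)) (hb'' : BddBelow (φ'' '' S)) (hba : BddAbove (δ '' S))
    (hrel : ∀ p ∈ S, φ' p ≤ φ'' p + δ p) :
    sInf (φ' '' S) - sInf (φ'' '' S) ≤ sSup (δ '' S) := by
  rw [sub_le_iff_le_add, add_comm]
  refine le_of_forall_pos_le_add fun ε hε => ?_
  obtain ⟨x, hx, hlt⟩ := exists_lt_of_csInf_lt (hS.image φ'')
    (lt_add_of_pos_right (sInf (φ'' '' S)) hε)
  obtain ⟨p, hp, rfl⟩ := hx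
  have h1 : sInf (φ' '' S) ≤ φ' p := csInf_le hb' ⟨p, hp, rfl⟩
  have h2 := hrel p hp
  have h3 : δ p ≤ sSup (δ '' S) := le_csSup hba ⟨p, hp, rfl⟩
  linarith

/-- Supplementary peeling lemma for policy improvement: for DTRs `π, π', π'', π^b` and any
stage `k ∈ {1,…,K−1}`, writing `a_k = π_k(h⃗_k)`,
`V^{π_k π'_{(k+1):K}/π^b}_k(h⃗_k) − V^{π_k π''_{(k+1):K}/π^b}_k(h⃗_k)
  ≤ sup_{p ∈ 𝒫_{h⃗_k,a_k}} ∫ [V^{π'/π^b}_{k+1}(h⃗_k,a_k,r,x) − V^{π''/π^b}_{k+1}(h⃗_k,a_k,r,x)] dp`. -/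
theorem peeling_policy_improvement
    (X : ℕ → Type) [∀ k, MeasurableSpace (X k)] (H : ℕ → Type)
    (concat : ∀ k, H k → ℝ → ℝ → X (k + 1) → H (k + 1))
    (P : ∀ k, H k → ℝ → Set (Measure (ℝ × X (k + 1))))
    (K : ℕ)
    (hPne : ∀ k (h : H k) (a : ℝ), a = 1 ∨ a = -1 → (P k h a).Nonempty)
    (hPprob : ∀ k (h : H k) (a : ℝ), ∀ p ∈ P k h a, IsProbabilityMeasure p)
    (hIntR : ∀ k (h : H k) (a : ℝ), ∀ p ∈ P k h a,
      Integrable (fun q : ℝ × X (k + 1) => q.1) p)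
    (hIntV : ∀ (πb π : ∀ k, H k → ℝ) k (h : H k) (a : ℝ), ∀ p ∈ P k h a,
      Integrable (fun q : ℝ × X (k + 1) =>
        rV X H concat P K πb π (k + 1) (concat k h a q.1 q.2)) p)
    (hBddB : ∀ (πb π : ∀ k, H k → ℝ) k (h : H k) (a : ℝ),
      BddBelow ((fun p : Measure (ℝ × X (k + 1)) =>
          ∫ q, (q.1 + rV X H concat P K πb π (k + 1) (concat k h a q.1 q.2)) ∂p) '' P k h a)
      ∧ BddBelow ((fun p : Measure (ℝ × X (k + 1)) =>
          ∫ q, rV X H concat P K πb π (k + 1) (concat k h a q.1 q.2) ∂p) '' P k h a))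
    (hBddA : ∀ k (h : H k) (a : ℝ),
      BddAbove ((fun p : Measure (ℝ × X (k + 1)) => ∫ q, q.1 ∂p) '' P k h a))
    (πb : ∀ k, H k → ℝ) (hπb : ∀ k (h : H k), πb k h = 1 ∨ πb k h = -1)
    (π π' π'' : ∀ k, H k → ℝ)
    (hπ : ∀ k (h : H k), π k h = 1 ∨ π k h = -1)
    (hπ' : ∀ k (h : H k), π' k h = 1 ∨ π' k h = -1)
    (hπ'' : ∀ k (h : H k), π'' k h = 1 ∨ π'' k h = -1)
    (k : ℕ) (hk : k + 1 < K) (h : H k) :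
    rV X H concat P K πb (mixAt H π π' k) k h
        - rV X H concat P K πb (mixAt H π π'' k) k h
      ≤ sSup ((fun p : Measure (ℝ × X (k + 1)) =>
          ∫ q, (rV X H concat P K πb π' (k + 1) (concat k h (π k h) q.1 q.2)
            - rV X H concat P K πb π'' (k + 1) (concat k h (π k h) q.1 q.2)) ∂p)
          '' P k h (π k h)) := by
  have hk1 : k + 1 ≤ K := by omega
  simp only [rV] at hIntV hBddB ⊢
  have hKk : K - k = K - (k + 1) + 1 := by omega
  rw [hKk]
  -- decomposition-based upper bound on the difference set
  have hDba : ∀ a : ℝ, BddAbove ((fun p : Measure (ℝ × X (k + 1)) =>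
      ∫ q, (rVal X H concat P πb π' (K - (k + 1)) (k + 1) (concat k h a q.1 q.2)
        - rVal X H concat P πb π'' (K - (k + 1)) (k + 1) (concat k h a q.1 q.2)) ∂p)
      '' P k h a) := by
    intro a
    obtain ⟨n, B, R, hle⟩ := rVal_upper_aux X H concat P K hPne hIntR hIntV hBddB hBddA
      πb hπb π' (K - (k + 1)) (k + 1) (by omega)
    choose m hm using fun i => (hBddB (B i) (R i) k h a).2
    obtain ⟨m'', hm''⟩ := (hBddB πb π'' k h a).2
    refine ⟨(-∑ i, m i) - m'', ?_⟩
    rintro x ⟨p, hp, rfl⟩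
    have hIV' := hIntV πb π' k h a p hp
    have hIV'' := hIntV πb π'' k h a p hp
    have hIVi : ∀ i, Integrable (fun q : ℝ × X (k + 1) =>
        rVal X H concat P (B i) (R i) (K - (k + 1)) (k + 1) (concat k h a q.1 q.2)) p :=
      fun i => hIntV (B i) (R i) k h a p hp
    have hsum : Integrable (fun q : ℝ × X (k + 1) =>
        ∑ i, rVal X H concat P (B i) (R i) (K - (k + 1)) (k + 1) (concat k h a q.1 q.2)) p :=
      integrable_finset_sum _ (fun i _ => hIVi i)
    have e1 : ∫ q, (rVal X H concat P πb π' (K - (k + 1)) (k + 1) (concat k h a q.1 q.2)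
        - rVal X H concat P πb π'' (K - (k + 1)) (k + 1) (concat k h a q.1 q.2)) ∂p
        = (∫ q, rVal X H concat P πb π' (K - (k + 1)) (k + 1) (concat k h a q.1 q.2) ∂p)
          - ∫ q, rVal X H concat P πb π'' (K - (k + 1)) (k + 1) (concat k h a q.1 q.2) ∂p :=
      integral_sub hIV' hIV''
    have e2 : ∫ q, rVal X H concat P πb π' (K - (k + 1)) (k + 1) (concat k h a q.1 q.2) ∂p
        ≤ -∑ i, ∫ q, rVal X H concat P (B i) (R i) (K - (k + 1)) (k + 1) (concat k h a q.1 q.2) ∂p := by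
      have hneg : Integrable (fun q : ℝ × X (k + 1) =>
          -∑ i, rVal X H concat P (B i) (R i) (K - (k + 1)) (k + 1) (concat k h a q.1 q.2)) p :=
        hsum.neg
      have := integral_mono hIV' hneg (fun q => hle (concat k h a q.1 q.2))
      rwa [integral_neg, integral_finset_sum _ (fun i _ => hIVi i)] at this
    have e3 : ∀ i, m i ≤ ∫ q, rVal X H concat P (B i) (R i) (K - (k + 1)) (k + 1)
        (concat k h a q.1 q.2) ∂p := fun i => hm i ⟨p, hp, rfl⟩
    have e4 : m'' ≤ ∫ q, rVal X H concat P πb π'' (K - (k + 1)) (k + 1) (concat k h a q.1 q.2) ∂p :=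
      hm'' ⟨p, hp, rfl⟩
    have e5 := Finset.sum_le_sum (fun i (_ : i ∈ Finset.univ) => e3 i)
    simp only [e1]
    linarith
  have hmixk : ∀ ρ : ∀ k, H k → ℝ, mixAt H π ρ k k h = π k h := by
    intro ρ; simp [mixAt]
  have hmixcong : ∀ (ρ : ∀ k, H k → ℝ) (h' : H (k + 1)),
      rVal X H concat P πb (mixAt H π ρ k) (K - (k + 1)) (k + 1) h'
        = rVal X H concat P πb ρ (K - (k + 1)) (k + 1) h' := by
    intro ρ h'
    refine rVal_congr_aux X H concat P _ _ _ _ (K - (k + 1)) (k + 1) ?_ h'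
    intro j' h'' hj'
    have hne : j' ≠ k := by omega
    exact ⟨rfl, by simp [mixAt, hne]⟩
  by_cases hc : π k h = πb k h
  · rw [hc]
    have hmix : ∀ ρ : ∀ k, H k → ℝ,
        rVal X H concat P πb (mixAt H π ρ k) (K - (k + 1) + 1) k h
        = sInf ((fun p : Measure (ℝ × X (k + 1)) =>
            ∫ q, rVal X H concat P πb ρ (K - (k + 1)) (k + 1) (concat k h (πb k h) q.1 q.2) ∂p)
            '' P k h (πb k h)) := by
      intro ρ
      simp only [rVal]
      rw [hmixk ρ, if_pos hc]
      simp only [hmixcong]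
    rw [hmix π', hmix π'']
    refine sInf_sub_sInf_le_sSup_aux (P k h (πb k h)) _ _ _
      (hPne k h (πb k h) (hπb k h)) (hBddB πb π' k h (πb k h)).2 (hBddB πb π'' k h (πb k h)).2
      (hDba (πb k h)) ?_
    intro p hp
    have hIV' := hIntV πb π' k h (πb k h) p hp
    have hIV'' := hIntV πb π'' k h (πb k h) p hp
    rw [integral_sub hIV' hIV'']
    linarith
  · have hc2 : π k h = -(πb k h) := by
      rcases hπ k h with h1 | h1 <;> rcases hπb k h with h2 | h2 <;>
        rw [h1, h2] <;> first | rfl | (exact absurd (h1.trans h2.symm) hc) | norm_num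
    rw [hc2]
    have hmixne : ∀ ρ : ∀ k, H k → ℝ, ¬(mixAt H π ρ k k h = πb k h) := by
      intro ρ; rw [hmixk ρ]; exact hc
    have hmix : ∀ ρ : ∀ k, H k → ℝ,
        rVal X H concat P πb (mixAt H π ρ k) (K - (k + 1) + 1) k h
        = sInf ((fun p : Measure (ℝ × X (k + 1)) =>
            ∫ q, (q.1 + rVal X H concat P πb ρ (K - (k + 1)) (k + 1)
              (concat k h (-(πb k h)) q.1 q.2)) ∂p)
            '' P k h (-(πb k h)))
          - sSup ((fun p : Measure (ℝ × X (k + 1)) => ∫ q, q.1 ∂p) '' P k h (πb k h)) := by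
      intro ρ
      simp only [rVal]
      rw [if_neg (hmixne ρ)]
      simp only [hmixcong]
    rw [hmix π', hmix π'']
    have hnegpm : -(πb k h) = 1 ∨ -(πb k h) = -1 := by
      rcases hπb k h with h1 | h1 <;> rw [h1] <;> norm_num
    have hgoal : ∀ A B C : ℝ, A - B ≤ C → (A - sSup ((fun p : Measure (ℝ × X (k + 1)) =>
        ∫ q, q.1 ∂p) '' P k h (πb k h))) - (B - sSup ((fun p : Measure (ℝ × X (k + 1)) =>
        ∫ q, q.1 ∂p) '' P k h (πb k h))) ≤ C := by
      intro A B C hABC; linarith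
    refine hgoal _ _ _ ?_
    refine sInf_sub_sInf_le_sSup_aux (P k h (-(πb k h))) _ _ _
      (hPne k h (-(πb k h)) hnegpm)
      (hBddB πb π' k h (-(πb k h))).1 (hBddB πb π'' k h (-(πb k h))).1
      (hDba (-(πb k h))) ?_
    intro p hp
    have hIV' := hIntV πb π' k h (-(πb k h)) p hp
    have hIV'' := hIntV πb π'' k h (-(πb k h)) p hp
    have hIR := hIntR k h (-(πb k h)) p hp
    rw [integral_add hIR hIV', integral_add hIR hIV'', integral_sub hIV' hIV'']
    linarith


end
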